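/- Let C be a preadditive category with binary biproducts and let D : Cᵒᵖ × C → Ab be a functor (a C-bimodule) that is additive in the first variable, i.e. for each object Z the map Hom(X,Y) → Hom(D(Y,Z), D(X,Z)) is additive. A 0-cocycle of C with coefficients in D is a family c assigning to each object A an element c_A ∈ D(A,A) such that D(1,σ)(c_A) = D(σ,1)(c_B) for every morphism σ : A → B. Then every 0-cocycle c is additive: for all objects X, Y, writing i₁, i₂, p₁, p₂ for the biproduct inclusions and projections of X ⊕ Y, one has c_{X⊕Y} = D(p₁,1)(D(1,i₁)(c_X)) + D(p₂,1)(D(1,i₂)(c_Y)) in D(X⊕Y, X⊕Y). -/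

import Mathlib

open CategoryTheory CategoryTheory.Limits

/-- Every `0`-cocycle of a preadditive category with binary biproducts, with coefficients
in a bimodule `D : Cᵒᵖ × C ⥤ Ab` which is additive in the first variable, is additive:
`c_{X⊕Y} = p₁^*(i₁)_*(c_X) + p₂^*(i₂)_*(c_Y)`. -/
theorem stmt_7 {C : Type*} [Category C] [Preadditive C] [HasBinaryBiproducts C]
    (D : (Cᵒᵖ × C) ⥤ AddCommGrpCat)
    (hadd : ∀ (X Y Z : C) (f g : X ⟶ Y),
      D.map ((((f + g).op, 𝟙 Z)) : (Opposite.op Y, Z) ⟶ (Opposite.op X, Z)) =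
        D.map ((f.op, 𝟙 Z) : (Opposite.op Y, Z) ⟶ (Opposite.op X, Z)) +
        D.map ((g.op, 𝟙 Z) : (Opposite.op Y, Z) ⟶ (Opposite.op X, Z)))
    (c : ∀ A : C, D.obj (Opposite.op A, A))
    (hc : ∀ (A B : C) (σ : A ⟶ B),
      D.map ((𝟙 (Opposite.op A), σ) : (Opposite.op A, A) ⟶ (Opposite.op A, B)) (c A) =
        D.map ((σ.op, 𝟙 B) : (Opposite.op B, B) ⟶ (Opposite.op A, B)) (c B))
    (X Y : C) :
    c (X ⊞ Y) =
      D.map (((biprod.fst : X ⊞ Y ⟶ X).op, 𝟙 (X ⊞ Y)) :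
          (Opposite.op X, X ⊞ Y) ⟶ (Opposite.op (X ⊞ Y), X ⊞ Y))
        (D.map ((𝟙 (Opposite.op X), (biprod.inl : X ⟶ X ⊞ Y)) :
          (Opposite.op X, X) ⟶ (Opposite.op X, X ⊞ Y)) (c X)) +
      D.map (((biprod.snd : X ⊞ Y ⟶ Y).op, 𝟙 (X ⊞ Y)) :
          (Opposite.op Y, X ⊞ Y) ⟶ (Opposite.op (X ⊞ Y), X ⊞ Y))
        (D.map ((𝟙 (Opposite.op Y), (biprod.inr : Y ⟶ X ⊞ Y)) :
          (Opposite.op Y, Y) ⟶ (Opposite.op Y, X ⊞ Y)) (c Y)) := by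
  have h1 := hadd (X ⊞ Y) (X ⊞ Y) (X ⊞ Y)
    (biprod.fst ≫ biprod.inl) (biprod.snd ≫ biprod.inr)
  rw [biprod.total] at h1
  have h0 : D.map (((𝟙 (X ⊞ Y)).op, 𝟙 (X ⊞ Y)) :
      (Opposite.op (X ⊞ Y), X ⊞ Y) ⟶ (Opposite.op (X ⊞ Y), X ⊞ Y)) (c (X ⊞ Y)) = c (X ⊞ Y) := by
    rw [show (((𝟙 (X ⊞ Y)).op, 𝟙 (X ⊞ Y)) :
      (Opposite.op (X ⊞ Y), X ⊞ Y) ⟶ (Opposite.op (X ⊞ Y), X ⊞ Y)) =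
      𝟙 (Opposite.op (X ⊞ Y), X ⊞ Y) from rfl, D.map_id]
    rfl
  have key := congrArg (fun f => f (c (X ⊞ Y))) h1
  simp only [AddCommGrpCat.hom_add_apply] at key
  rw [h0] at key
  rw [key]
  congr 1
  · rw [hc X (X ⊞ Y) biprod.inl, ← comp_apply, ← D.map_comp]
    congr 1
    congr 1
    congr 1
    apply Prod.ext <;> simp
  · rw [hc Y (X ⊞ Y) biprod.inr, ← comp_apply, ← D.map_comp]
    congr 1
    congr 1
    congr 1
    apply Prod.ext <;> simp
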